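/- Let r be a bounded function on a subshift Σ with finite variation var(r), depending only on nonnegative coordinates, and let ℓ assign to each cylinder K_{x'_{-n},...,x'_{-1}} (relative to a fixed tail x_0^∞) the value exp(-r_n(x'_{-n},...,x'_{-1},x_0^∞))·ψ(x'_{-n},...,x'_{-1},x_0^∞) for a positive continuous ψ. If κ replaces the suffix of length |a| (the word a, with a a prefix of (x'_{-|a|},...,x'_{-1})) by a word b with corresponding value exp(-r_{n+|b|-|a|}(x'_{-n},...,x'_{-|a|-1}, b, x_0^∞))·ψ(...), then the ratio (ℓ∘κ)(K)/ℓ(K) is bounded above by (max ψ/min ψ)·exp(|R⁺(a·x_0^∞, b·x_0^∞)| + var(r)), where R⁺(ax₀^∞, bx₀^∞) := r_{|b|}(bx₀^∞) - r_{|a|}(ax₀^∞). -/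

import Mathlib

/-- Concatenation of a finite word with an infinite one-sided sequence. -/
noncomputable def wordConcat {S : Type*} (w : List S) (z : ℕ → S) : ℕ → S :=
  fun i => if h : i < w.length then w.get ⟨i, h⟩ else z (i - w.length)

lemma shift_iter {S : Type*} (i : ℕ) (z : ℕ → S) :
    (fun z : ℕ → S => fun n => z (n + 1))^[i] z = fun n => z (n + i) := by
  induction i with
  | zero => simp
  | succ i ih =>
    rw [Function.iterate_succ_apply', ih]
    funext n; exact congrArg z (by omega)

lemma shift_wordConcat {S : Type*} (w : List S) (z : ℕ → S) :
    (fun z : ℕ → S => fun n => z (n + 1))^[w.length] (wordConcat w z) = z := by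
  rw [shift_iter]; funext n; simp [wordConcat]

lemma shift_wordConcat_append {S : Type*} (c w : List S) (z : ℕ → S) :
    (fun z : ℕ → S => fun n => z (n + 1))^[c.length] (wordConcat (c ++ w) z)
      = wordConcat w z := by
  rw [shift_iter]; funext n
  simp only [wordConcat, List.length_append]
  by_cases h : n < w.length
  · rw [dif_pos (by omega), dif_pos h]
    simp only [List.get_eq_getElem]
    rw [List.getElem_append_right (by omega)]
    congr 1; omega
  · rw [dif_neg (by omega), dif_neg (by omega)]
    exact congrArg z (by omega)

lemma wordConcat_agree {S : Type*} (c w w' : List S) (z : ℕ → S) (i j : ℕ)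
    (h : j + i < c.length) :
    (fun z : ℕ → S => fun n => z (n + 1))^[i] (wordConcat (c ++ w) z) j
      = (fun z : ℕ → S => fun n => z (n + 1))^[i] (wordConcat (c ++ w') z) j := by
  rw [shift_iter, shift_iter]
  simp only [wordConcat, List.length_append]
  rw [dif_pos (by omega), dif_pos (by omega)]
  simp only [List.get_eq_getElem]
  rw [List.getElem_append_left (by omega), List.getElem_append_left (by omega)]

/-- Distortion bound for the word-exchange holonomy: for the cylinder mass
`ℓ(w') = exp(-r_{|w'|}(w'·x₀^∞))·ψ(w'·x₀^∞)`, replacing the suffix `a` of the word by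
`b` distorts the mass by at most `(max ψ/min ψ)·exp(|R⁺(a·x₀^∞, b·x₀^∞)| + var(r))`. -/
theorem stmt14 {S : Type*} [Nonempty S]
    (r : (ℕ → S) → ℝ) (Mr : ℝ) (hMr : ∀ z, |r z| ≤ Mr)
    (ψ : (ℕ → S) → ℝ) (cmin cmax : ℝ) (hcmin : 0 < cmin)
    (hψ : ∀ z, cmin ≤ ψ z ∧ ψ z ≤ cmax)
    (varAt : ℕ → ℝ)
    (hvarAt : ∀ k, varAt k = sSup {v : ℝ | ∃ z w : ℕ → S,
      (∀ i < k, z i = w i) ∧ v = |r z - r w|})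
    (hsum : Summable varAt)
    (Vr : ℝ) (hVr : Vr = ∑' k : ℕ, varAt (k + 1))
    (c a b : List S) (xtail : ℕ → S)
    (Rp : ℝ)
    (hRp : Rp =
      birkhoffSum (fun z n => z (n + 1)) r b.length (wordConcat b xtail) -
      birkhoffSum (fun z n => z (n + 1)) r a.length (wordConcat a xtail)) :
    (Real.exp (-(birkhoffSum (fun z n => z (n + 1)) r (c.length + b.length)
          (wordConcat (c ++ b) xtail))) * ψ (wordConcat (c ++ b) xtail)) /
      (Real.exp (-(birkhoffSum (fun z n => z (n + 1)) r (c.length + a.length)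
          (wordConcat (c ++ a) xtail))) * ψ (wordConcat (c ++ a) xtail)) ≤
      (cmax / cmin) * Real.exp (|Rp| + Vr) := by
  set T : (ℕ → S) → (ℕ → S) := fun z n => z (n + 1) with hT
  -- basic facts about varAt
  have hbdd : ∀ k : ℕ, BddAbove {v : ℝ | ∃ z w : ℕ → S,
      (∀ i < k, z i = w i) ∧ v = |r z - r w|} := by
    intro k
    refine ⟨Mr + Mr, ?_⟩
    rintro v ⟨z, w, -, rfl⟩
    exact (abs_sub _ _).trans (add_le_add (hMr z) (hMr w))
  have hvar_nonneg : ∀ k, 0 ≤ varAt k := by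
    intro k
    rw [hvarAt k]
    have : (0 : ℝ) ∈ {v : ℝ | ∃ z w : ℕ → S,
        (∀ i < k, z i = w i) ∧ v = |r z - r w|} := by
      refine ⟨fun _ => Classical.arbitrary S, fun _ => Classical.arbitrary S,
        fun _ _ => rfl, by simp⟩
    exact le_csSup (hbdd k) this
  have hvar_le : ∀ (z w : ℕ → S) (k : ℕ), (∀ i < k, z i = w i) →
      |r z - r w| ≤ varAt k := by
    intro z w k h
    rw [hvarAt k]
    exact le_csSup (hbdd k) ⟨z, w, h, rfl⟩
  -- split birkhoff sums
  have hsplit : ∀ w : List S,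
      birkhoffSum T r (c.length + w.length) (wordConcat (c ++ w) xtail) =
      birkhoffSum T r c.length (wordConcat (c ++ w) xtail) +
      birkhoffSum T r w.length (wordConcat w xtail) := by
    intro w
    rw [birkhoffSum_add, shift_wordConcat_append]
  set A := birkhoffSum T r (c.length + a.length) (wordConcat (c ++ a) xtail) with hA
  set B := birkhoffSum T r (c.length + b.length) (wordConcat (c ++ b) xtail) with hB
  -- bound the head difference
  have hhead : birkhoffSum T r c.length (wordConcat (c ++ a) xtail) -
      birkhoffSum T r c.length (wordConcat (c ++ b) xtail) ≤ Vr := by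
    have h1 : birkhoffSum T r c.length (wordConcat (c ++ a) xtail) -
        birkhoffSum T r c.length (wordConcat (c ++ b) xtail) =
        ∑ i ∈ Finset.range c.length,
          (r (T^[i] (wordConcat (c ++ a) xtail)) - r (T^[i] (wordConcat (c ++ b) xtail))) := by
      rw [birkhoffSum, birkhoffSum, Finset.sum_sub_distrib]
    rw [h1]
    have h2 : ∑ i ∈ Finset.range c.length,
        (r (T^[i] (wordConcat (c ++ a) xtail)) - r (T^[i] (wordConcat (c ++ b) xtail))) ≤
        ∑ i ∈ Finset.range c.length, varAt (c.length - i) := by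
      refine Finset.sum_le_sum fun i hi => ?_
      refine (le_abs_self _).trans (hvar_le _ _ _ ?_)
      intro j hj
      exact wordConcat_agree c a b xtail i j
        (by simp at hi; omega)
    refine h2.trans ?_
    have h3 : ∑ i ∈ Finset.range c.length, varAt (c.length - i) =
        ∑ i ∈ Finset.range c.length, varAt (i + 1) := by
      rw [← Finset.sum_range_reflect]
      refine Finset.sum_congr rfl fun j hj => ?_
      simp at hj
      congr 1
      omega
    rw [h3, hVr]
    exact Summable.sum_le_tsum _ (fun k _ => hvar_nonneg (k + 1)) ((summable_nat_add_iff 1).mpr hsum)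
  have hAB : A - B ≤ |Rp| + Vr := by
    have := hsplit a
    have := hsplit b
    have : A - B = (birkhoffSum T r c.length (wordConcat (c ++ a) xtail) -
        birkhoffSum T r c.length (wordConcat (c ++ b) xtail)) - Rp := by
      rw [hA, hB, hsplit a, hsplit b, hRp]; ring
    rw [this]
    have := neg_abs_le Rp
    linarith
  -- assemble
  have hψa := hψ (wordConcat (c ++ a) xtail)
  have hψb := hψ (wordConcat (c ++ b) xtail)
  have hrw : Real.exp (-B) * ψ (wordConcat (c ++ b) xtail) /
      (Real.exp (-A) * ψ (wordConcat (c ++ a) xtail)) =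
      Real.exp (A - B) * (ψ (wordConcat (c ++ b) xtail) / ψ (wordConcat (c ++ a) xtail)) := by
    rw [← div_mul_div_comm, ← Real.exp_sub]
    ring_nf
  rw [hrw]
  rw [mul_comm (cmax / cmin)]
  refine mul_le_mul (Real.exp_le_exp.mpr hAB) ?_ ?_ (Real.exp_pos _).le
  · exact div_le_div₀ (le_trans hcmin.le hψb.1 |>.trans hψb.2 |> fun _ => hcmin.le.trans (hψb.1.trans hψb.2)) hψb.2 hcmin hψa.1
  · exact div_nonneg (le_trans hcmin.le hψb.1) (le_trans hcmin.le hψa.1)
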